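/- arXiv:2312.14762 — 2 statements merged into one kernel-verified Lean document; each statement's English description precedes it below -/
import Mathlib

section
/- Let G be a two-factor analysis graph with latent nodes h₁, h₂ such that ch(h₁) ∩ ch(h₂) = {j₁, j₂}. Let i₁, i₂ ∈ ch(h₁) \ {j₁, j₂} and k₁, k₂ ∈ ch(h₂) \ {j₁, j₂} be such that i₁, i₂, j₁, j₂, k₁, k₂ are pairwise distinct. Then the hexad σ_{k₁k₂} σ_{i₁i₂} σ_{j₁j₂} − σ_{k₁k₂} σ_{j₁i₂} σ_{j₂i₁} − σ_{i₁i₂} σ_{j₁k₂} σ_{j₂k₁} vanishes for every Σ = Ω + Λ Λᵀ with Λ ∈ ℝ^D and Ω diagonal. -/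
open Matrix

theorem stmt_4 (p : ℕ) (ch : Fin 2 → Finset (Fin p))
    (j₁ j₂ i₁ i₂ k₁ k₂ : Fin p)
    (hinter : ch 0 ∩ ch 1 = {j₁, j₂})
    (hi₁ : i₁ ∈ ch 0 \ {j₁, j₂}) (hi₂ : i₂ ∈ ch 0 \ {j₁, j₂})
    (hk₁ : k₁ ∈ ch 1 \ {j₁, j₂}) (hk₂ : k₂ ∈ ch 1 \ {j₁, j₂})
    (hdist : List.Pairwise (· ≠ ·) [i₁, i₂, j₁, j₂, k₁, k₂])
    (Λ : Matrix (Fin p) (Fin 2) ℝ)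
    (hsupp : ∀ v h, v ∉ ch h → Λ v h = 0)
    (Ω : Matrix (Fin p) (Fin p) ℝ) (hΩ : Ω.IsDiag)
    (S : Matrix (Fin p) (Fin p) ℝ) (hS : S = Ω + Λ * Λᵀ) :
    S k₁ k₂ * S i₁ i₂ * S j₁ j₂ - S k₁ k₂ * S j₁ i₂ * S j₂ i₁
      - S i₁ i₂ * S j₁ k₂ * S j₂ k₁ = 0 := by
  simp only [List.pairwise_cons, List.mem_cons, List.not_mem_nil] at hdist
  obtain ⟨h1, h2, h3, h4, h5, -⟩ := hdist
  have hoff : ∀ u v : Fin p, u ≠ v →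
      S u v = Λ u 0 * Λ v 0 + Λ u 1 * Λ v 1 := by
    intro u v huv
    rw [hS]
    simp [Matrix.add_apply, Matrix.mul_apply, Fin.sum_univ_two,
      hΩ huv, Matrix.transpose_apply]
  -- i's are not children of h 1, k's not of h 0
  have hni : ∀ i, i ∈ ch 0 \ {j₁, j₂} → Λ i 1 = 0 := by
    intro i hi
    simp only [Finset.mem_sdiff] at hi
    apply hsupp
    intro hmem
    have : i ∈ ch 0 ∩ ch 1 := Finset.mem_inter.mpr ⟨hi.1, hmem⟩
    rw [hinter] at this
    exact hi.2 this
  have hnk : ∀ k, k ∈ ch 1 \ {j₁, j₂} → Λ k 0 = 0 := by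
    intro k hk
    simp only [Finset.mem_sdiff] at hk
    apply hsupp
    intro hmem
    have : k ∈ ch 0 ∩ ch 1 := Finset.mem_inter.mpr ⟨hmem, hk.1⟩
    rw [hinter] at this
    exact hk.2 this
  rw [hoff k₁ k₂ (h5 k₂ (by tauto)), hoff i₁ i₂ (h1 i₂ (by tauto)),
    hoff j₁ j₂ (h3 j₂ (by tauto)),
    hoff j₁ i₂ ((h2 j₁ (by tauto)).symm), hoff j₂ i₁ ((h1 j₂ (by tauto)).symm),
    hoff j₁ k₂ (h3 k₂ (by tauto)), hoff j₂ k₁ (h4 k₁ (by tauto)),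
    hni i₁ hi₁, hni i₂ hi₂, hnk k₁ hk₁, hnk k₂ hk₂]
  ring
end

section
/- Let Σ be a p×p symmetric matrix over ℂ of rank at most 2 such that: (i) Σ_{V₁,V₃} = 0, (ii) rank(Σ_{V₁, V₁∪V₂}) ≤ 1, (iii) rank(Σ_{V₂∪V₃, V₃}) ≤ 1, for a partition V = V₁ ⊔ V₂ ⊔ V₃ of the index set. If additionally there exists v ∈ V₁ with σ_{vv} ≠ 0 and, setting y_w = σ_{vw}/√σ_{vv} for w ∈ V₂ and y_w = 0 for w ∈ V₃ and A = Σ_{V₂∪V₃, V₂∪V₃} − y yᵀ, there exists u with a_{uu} ≠ 0, then there exists a p×2 matrix Λ over ℂ with Λ_{V₁, 2} = 0 and Λ_{V₃, 1} = 0 such that Σ = Λ Λᵀ. -/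
open Matrix

/-- All 2×2 minors of a matrix of rank ≤ 1 vanish. -/
lemma minor_vanish {m n : Type*} [Fintype m] [Fintype n] (M : Matrix m n ℂ)
    (h : M.rank ≤ 1) (i k : m) (j l : n) : M i j * M k l = M i l * M k j := by
  by_contra hne
  have hd : M i j * M k l - M i l * M k j ≠ 0 := sub_ne_zero.mpr hne
  have hli : LinearIndependent ℂ ![Mᵀ j, Mᵀ l] := by
    rw [LinearIndependent.pair_iff]
    intro a b hab
    have hi := congrFun hab i
    have hk := congrFun hab k
    simp only [Pi.add_apply, Pi.smul_apply, Matrix.transpose_apply, smul_eq_mul,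
      Pi.zero_apply] at hi hk
    have ha : a * (M i j * M k l - M i l * M k j) = 0 := by
      linear_combination M k l * hi - M i l * hk
    have hb : b * (M i j * M k l - M i l * M k j) = 0 := by
      linear_combination M i j * hk - M k j * hi
    exact ⟨(mul_eq_zero.mp ha).resolve_right hd, (mul_eq_zero.mp hb).resolve_right hd⟩
  have h2 : Fintype.card (Fin 2) = (Set.range ![Mᵀ j, Mᵀ l]).finrank ℂ :=
    linearIndependent_iff_card_eq_finrank_span.mp hli
  have hsub : Submodule.span ℂ (Set.range ![Mᵀ j, Mᵀ l]) ≤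
      Submodule.span ℂ (Set.range Mᵀ) := by
    rw [Submodule.span_le]
    rintro x ⟨c, rfl⟩
    fin_cases c <;> exact Submodule.subset_span ⟨_, rfl⟩
  have hmono := Submodule.finrank_mono hsub
  rw [Matrix.rank_eq_finrank_span_cols] at h
  change Module.finrank ℂ (Submodule.span ℂ (Set.range Mᵀ)) ≤ 1 at h
  simp only [Fintype.card_fin] at h2
  rw [Set.finrank] at h2
  omega

/-- Subtracting the outer product of a (normalized) nonzero column from a symmetric matrix
drops the rank by one. -/
lemma rank_sub_outer {p : ℕ} (S : Matrix (Fin p) (Fin p) ℂ) (hsym : S.IsSymm)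
    (hrk : S.rank ≤ 2) (v : Fin p) (s : ℂ) (hs : s ^ 2 = S v v) (hs0 : s ≠ 0) :
    (Matrix.of fun i j => S i j - (S i v / s) * (S j v / s)).rank ≤ 1 := by
  set lam : Fin p → ℂ := fun i => S i v / s with hlamdef
  set B : Matrix (Fin p) (Fin p) ℂ := Matrix.of fun i j => S i j - lam i * lam j with hBdef
  have hlamv : lam v = s := by
    simp only [hlamdef]
    field_simp
    rw [← hs]
  have hBv : ∀ j, B v j = 0 := by
    intro j
    have h1 : S j v = S v j := hsym.apply v j
    simp only [hBdef, Matrix.of_apply, hlamdef]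
    field_simp
    rw [← hs, h1]; ring
  set W := Submodule.span ℂ (Set.range Bᵀ) with hW
  set L := Submodule.span ℂ ({lam} : Set (Fin p → ℂ)) with hL
  have hWv : ∀ x ∈ W, x v = 0 := by
    intro x hx
    have hker : W ≤ LinearMap.ker (LinearMap.proj v : (Fin p → ℂ) →ₗ[ℂ] ℂ) := by
      rw [hW, Submodule.span_le]
      rintro y ⟨c, rfl⟩
      simp only [SetLike.mem_coe, LinearMap.mem_ker, LinearMap.proj_apply]
      exact hBv c
    exact hker hx
  have hlamW : lam ∉ W := by
    intro hmem
    exact hs0 (hlamv ▸ hWv lam hmem)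
  have hlamS : lam ∈ Submodule.span ℂ (Set.range Sᵀ) := by
    have : lam = s⁻¹ • Sᵀ v := by
      funext i
      simp [hlamdef, div_eq_inv_mul, mul_comm]
    rw [this]
    exact Submodule.smul_mem _ _ (Submodule.subset_span ⟨v, rfl⟩)
  have hsup : W ⊔ L ≤ Submodule.span ℂ (Set.range Sᵀ) := by
    apply sup_le
    · rw [hW, Submodule.span_le]
      rintro x ⟨c, rfl⟩
      have hx : Bᵀ c = Sᵀ c - lam c • lam := by
        funext i
        simp only [Matrix.transpose_apply, hBdef, Matrix.of_apply, Pi.sub_apply,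
          Pi.smul_apply, smul_eq_mul]
        ring
      rw [hx]
      exact Submodule.sub_mem _ (Submodule.subset_span ⟨c, rfl⟩)
        (Submodule.smul_mem _ _ hlamS)
    · rw [hL, Submodule.span_le]
      rintro x hx
      rw [Set.mem_singleton_iff] at hx
      subst hx
      exact hlamS
  have hlamsup : lam ∈ W ⊔ L :=
    (le_sup_right : L ≤ W ⊔ L) (Submodule.mem_span_singleton_self lam)
  have hlt : W < W ⊔ L := lt_of_le_of_ne le_sup_left (by
    intro h
    exact hlamW (h ▸ hlamsup))
  have h1 := Submodule.finrank_lt_finrank_of_lt hlt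
  have h2 := Submodule.finrank_mono hsup
  have h3 : S.rank = Module.finrank ℂ (Submodule.span ℂ (Set.range Sᵀ)) :=
    Matrix.rank_eq_finrank_span_cols S
  have h4 : B.rank = Module.finrank ℂ W := Matrix.rank_eq_finrank_span_cols B
  rw [h3] at hrk
  rw [h4]
  omega

theorem stmt_13 (p : ℕ) (S : Matrix (Fin p) (Fin p) ℂ) (hsym : S.IsSymm)
    (hrk : S.rank ≤ 2)
    (V₁ V₂ V₃ : Finset (Fin p))
    (h12 : Disjoint V₁ V₂) (h13 : Disjoint V₁ V₃) (h23 : Disjoint V₂ V₃)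
    (hunion : V₁ ∪ V₂ ∪ V₃ = Finset.univ)
    (hzero : ∀ i ∈ V₁, ∀ j ∈ V₃, S i j = 0)
    (hrk1 : (S.submatrix (fun i : V₁ => (i : Fin p))
        (fun j : (V₁ ∪ V₂ : Finset (Fin p)) => (j : Fin p))).rank ≤ 1)
    (hrk2 : (S.submatrix (fun i : (V₂ ∪ V₃ : Finset (Fin p)) => (i : Fin p))
        (fun j : V₃ => (j : Fin p))).rank ≤ 1)
    (v : Fin p) (hv : v ∈ V₁) (hvv : S v v ≠ 0)
    (s : ℂ) (hs : s ^ 2 = S v v)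
    (y : Fin p → ℂ)
    (hy2 : ∀ w ∈ V₂, y w = S v w / s) (hy3 : ∀ w ∈ V₃, y w = 0)
    (A : Matrix (Fin p) (Fin p) ℂ) (hAdef : ∀ i j, A i j = S i j - y i * y j)
    (u : Fin p) (hu : u ∈ V₂ ∪ V₃) (huu : A u u ≠ 0) :
    ∃ Λ : Matrix (Fin p) (Fin 2) ℂ,
      (∀ i ∈ V₁, Λ i 1 = 0) ∧ (∀ i ∈ V₃, Λ i 0 = 0) ∧ S = Λ * Λᵀ := by
  have hs0 : s ≠ 0 := by
    intro h
    apply hvv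
    rw [← hs, h]; ring
  set lam : Fin p → ℂ := fun i => S i v / s with hlamdef
  set B : Matrix (Fin p) (Fin p) ℂ := Matrix.of fun i j => S i j - lam i * lam j with hBdef
  have hBrank : B.rank ≤ 1 := rank_sub_outer S hsym hrk v s hs hs0
  have hBsym : ∀ i j, B i j = B j i := by
    intro i j
    simp only [hBdef, Matrix.of_apply, hsym.apply i j]
    ring
  -- lam agrees with y on V₂ ∪ V₃
  have hlam_y : ∀ w ∈ V₂ ∪ V₃, lam w = y w := by
    intro w hw
    rcases Finset.mem_union.mp hw with hw2 | hw3
    · rw [hy2 w hw2, hlamdef]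
      simp only [hsym.apply v w]
    · rw [hy3 w hw3, hlamdef]
      have : S w v = 0 := by rw [hsym.apply v w]; exact hzero v hv w hw3
      simp [this]
  have hBuu : B u u = A u u := by
    rw [hAdef, hBdef]
    simp only [Matrix.of_apply, hlam_y u hu]
  have hBuu0 : B u u ≠ 0 := hBuu ▸ huu
  obtain ⟨t, ht⟩ : ∃ t : ℂ, t ^ 2 = B u u := IsAlgClosed.exists_pow_nat_eq (B u u) two_pos
  have ht0 : t ≠ 0 := by
    intro h
    apply hBuu0
    rw [← ht, h]; ring
  set mu : Fin p → ℂ := fun i => B i u / t with hmudef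
  have hkey : ∀ i j, B i j = mu i * mu j := by
    intro i j
    have hminor : B i j * B u u = B i u * B u j := minor_vanish B hBrank i u j u
    simp only [hmudef]
    rw [div_mul_div_comm, hBsym j u]
    rw [show t * t = B u u by rw [← ht]; ring]
    field_simp
    linear_combination hminor
  -- sparsity of lam on V₃
  have hlam3 : ∀ i ∈ V₃, lam i = 0 := by
    intro i hi
    have : S i v = 0 := by rw [hsym.apply v i]; exact hzero v hv i hi
    simp [hlamdef, this]
  -- sparsity of mu on V₁
  have hmu1 : ∀ i ∈ V₁, mu i = 0 := by
    intro i hi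
    have hBiu : B i u = 0 := by
      rcases Finset.mem_union.mp hu with hu2 | hu3
      · -- use hrk1
        have hvm : v ∈ V₁ ∪ V₂ := Finset.mem_union_left _ hv
        have hum : u ∈ V₁ ∪ V₂ := Finset.mem_union_right _ hu2
        have hminor := minor_vanish _ hrk1 ⟨i, hi⟩ ⟨v, hv⟩ ⟨u, hum⟩ ⟨v, hvm⟩
        simp only [Matrix.submatrix_apply] at hminor
        -- hminor : S i u * S v v = S i v * S v u
        have hSuv : S u v = S v u := hsym.apply v u
        simp only [hBdef, Matrix.of_apply, hlamdef]
        rw [hSuv]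
        field_simp
        rw [← hs] at hminor
        linear_combination hminor
      · have h1 : S i u = 0 := hzero i hi u hu3
        have h2 : lam u = 0 := by
          have : S u v = 0 := by rw [hsym.apply v u]; exact hzero v hv u hu3
          simp [hlamdef, this]
        simp [hBdef, h1, h2]
    simp [hmudef, hBiu]
  refine ⟨Matrix.of fun i => ![lam i, mu i], ?_, ?_, ?_⟩
  · intro i hi
    simpa using hmu1 i hi
  · intro i hi
    simpa using hlam3 i hi
  · ext i j
    rw [Matrix.mul_apply, Fin.sum_univ_two]
    simp only [Matrix.transpose_apply, Matrix.of_apply, Matrix.cons_val_zero,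
      Matrix.cons_val_one, Matrix.head_cons]
    have := hkey i j
    simp only [hBdef, Matrix.of_apply] at this
    linear_combination this
end
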